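/- (Neighbor Removal Lemma) Let r be a vertex of a connected graph G and A ⊆ N(r) a set of neighbors with N(A) ⊆ N[r]. Then π(G,r) = |A| + π(G−A, r). -/

import Mathlib

open SimpleGraph

/-- A single pebbling step: remove two pebbles from `u`, add one to a neighbor `v`. -/
def PebStep {V : Type} (G : SimpleGraph V) (C C' : V → ℕ) : Prop :=
  ∃ u v : V, G.Adj u v ∧ 2 ≤ C u ∧
    C' u + 2 = C u ∧ C' v = C v + 1 ∧ ∀ w, w ≠ u → w ≠ v → C' w = C w

/-- `C` is `t`-fold `r`-solvable. -/
def TSolvable {V : Type} (G : SimpleGraph V) (C : V → ℕ) (r : V) (t : ℕ) : Prop :=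
  ∃ C', Relation.ReflTransGen (PebStep G) C C' ∧ t ≤ C' r

/-- The `t`-pebbling number of `G` rooted at `r`. -/
noncomputable def piT {V : Type} (G : SimpleGraph V) (r : V) (t : ℕ) : ℕ :=
  sInf {s | ∀ C : V → ℕ, s ≤ ∑ᶠ v, C v → TSolvable G C r t}

/-- The pebbling number of `G` rooted at `r`. -/
noncomputable def pin {V : Type} (G : SimpleGraph V) (r : V) : ℕ := piT G r 1

/-- The `t`-pebbling number of `G`. -/
noncomputable def piGt {V : Type} (G : SimpleGraph V) (t : ℕ) : ℕ := ⨆ r, piT G r t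

/-- The pebbling number of `G`. -/
noncomputable def piG {V : Type} (G : SimpleGraph V) : ℕ := ⨆ r, pin G r

/-- Eccentricity of `r`. -/
noncomputable def eccG {V : Type} (G : SimpleGraph V) (r : V) : ℕ := ⨆ v, G.dist r v

/-- Diameter of `G`. -/
noncomputable def diamG {V : Type} (G : SimpleGraph V) : ℕ := ⨆ u, eccG G u


namespace NRem

variable {V : Type}

attribute [local instance] Classical.propDecidable

/-- the graph on `V` with all edges incident to `A` removed -/
def cutG (G : SimpleGraph V) (A : Set V) : SimpleGraph V where
  Adj x y := G.Adj x y ∧ x ∉ A ∧ y ∉ A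
  symm := by constructor; rintro x y ⟨h, hx, hy⟩; exact ⟨h.symm, hy, hx⟩
  loopless := by constructor; rintro x ⟨h, _, _⟩; exact G.loopless.irrefl x h

lemma pebStep_mk (K : SimpleGraph V) {x y : V} (hadj : K.Adj x y) {F : V → ℕ} (h2 : 2 ≤ F x) :
    PebStep K F (fun w => if w = x then F x - 2 else if w = y then F y + 1 else F w) := by
  have hxy : x ≠ y := hadj.ne
  refine ⟨x, y, hadj, h2, ?_, ?_, ?_⟩
  · simp only [if_pos rfl, if_true]; omega
  · simp only [if_neg hxy.symm, if_pos rfl, if_true]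
  · intro w h1 h2'; simp only [if_neg h1, if_neg h2']

lemma many_steps (K : SimpleGraph V) {u v : V} (hadj : K.Adj u v) :
    ∀ (k : ℕ) (C : V → ℕ), 2 * k ≤ C u →
    ∃ C', Relation.ReflTransGen (PebStep K) C C' ∧ C' u + 2 * k = C u ∧ C' v = C v + k ∧
      ∀ w, w ≠ u → w ≠ v → C' w = C w := by
  intro k
  induction k with
  | zero => exact fun C _ => ⟨C, .refl, by omega, by omega, fun _ _ _ => rfl⟩
  | succ k ih =>
    intro C hk
    have h2 : 2 ≤ C u := by omega
    have huv : u ≠ v := hadj.ne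
    set C₁ := fun w => if w = u then C u - 2 else if w = v then C v + 1 else C w with hC₁
    have hstep : PebStep K C C₁ := pebStep_mk K hadj h2
    have hC₁u : C₁ u = C u - 2 := by simp [hC₁]
    have hC₁v : C₁ v = C v + 1 := by simp [hC₁, huv.symm]
    obtain ⟨C', hr, e1, e2, e3⟩ := ih C₁ (by omega)
    refine ⟨C', .head hstep hr, by omega, by omega, ?_⟩
    intro w h1 h2'
    rw [e3 w h1 h2', hC₁]; simp only [if_neg h1, if_neg h2']

lemma walk_solvable (K : SimpleGraph V) :
    ∀ {u v : V} (p : K.Walk u v) (C : V → ℕ) (t : ℕ), t * 2 ^ p.length ≤ C v →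
    ∃ C', Relation.ReflTransGen (PebStep K) C C' ∧ t ≤ C' u := by
  intro u v p
  induction p with
  | nil => exact fun C t h => ⟨C, .refl, by simpa using h⟩
  | @cons u w v h q ih =>
    intro C t hC
    obtain ⟨C₂, hr₂, h2t⟩ := ih C (2 * t) (by rw [Walk.length_cons] at hC; ring_nf at hC ⊢; omega)
    obtain ⟨C₃, hr₃, e1, e2, _⟩ := many_steps K h.symm t C₂ (by omega)
    exact ⟨C₃, hr₂.trans hr₃, by omega⟩

lemma exists_bound [Fintype V] (K : SimpleGraph V) (hK : K.Connected) (ρ : V) :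
    ∃ B : ℕ, ∀ C : V → ℕ, B ≤ ∑ v, C v → TSolvable K C ρ 1 := by
  refine ⟨∑ v, 2 ^ K.dist ρ v, fun C hC => ?_⟩
  have hne : (Finset.univ : Finset V).Nonempty := ⟨ρ, Finset.mem_univ ρ⟩
  have hex : ∃ v, 2 ^ K.dist ρ v ≤ C v := by
    by_contra hcon
    push_neg at hcon
    have := Finset.sum_lt_sum_of_nonempty hne (fun i _ => hcon i)
    omega
  obtain ⟨v, hv⟩ := hex
  obtain ⟨p, hp⟩ := (hK.preconnected ρ v).exists_walk_length_eq_dist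
  obtain ⟨C', hr, h1⟩ := walk_solvable K p C 1 (by rw [hp]; omega)
  exact ⟨C', hr, h1⟩

lemma reach_zero (K : SimpleGraph V) {C' : V → ℕ}
    (h : Relation.ReflTransGen (PebStep K) (fun _ => 0) C') : C' = fun _ => 0 := by
  induction h with
  | refl => rfl
  | tail h₁ h₂ ih =>
    rw [ih] at h₂
    obtain ⟨u, v, _, h2, _⟩ := h₂
    simp at h2


section Sums

variable [Fintype V]

lemma sum_split2 (f : V → ℕ) {u v : V} (h : u ≠ v) :
    ∑ w, f w = f u + (f v + ∑ w ∈ (Finset.univ.erase u).erase v, f w) := by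
  rw [Finset.add_sum_erase _ f (Finset.mem_erase.mpr ⟨h.symm, Finset.mem_univ v⟩),
    Finset.add_sum_erase _ f (Finset.mem_univ u)]

lemma sum_rel2 (f g : V → ℕ) {u v : V} (h : u ≠ v) (hw : ∀ w, w ≠ u → w ≠ v → f w = g w) :
    (∑ w, f w) + (g u + g v) = (∑ w, g w) + (f u + f v) := by
  have ht : ∑ w ∈ (Finset.univ.erase u).erase v, f w = ∑ w ∈ (Finset.univ.erase u).erase v, g w :=
    Finset.sum_congr rfl (fun w hwm => hw w
      (Finset.ne_of_mem_erase (Finset.mem_of_mem_erase hwm)) (Finset.ne_of_mem_erase hwm))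
  rw [sum_split2 f h, sum_split2 g h, ht]
  omega

lemma sum_rel1 (f g : V → ℕ) (u : V) (hw : ∀ w, w ≠ u → f w = g w) :
    (∑ w, f w) + g u = (∑ w, g w) + f u := by
  have ht : ∑ w ∈ Finset.univ.erase u, f w = ∑ w ∈ Finset.univ.erase u, g w :=
    Finset.sum_congr rfl (fun w hwm => hw w (Finset.ne_of_mem_erase hwm))
  rw [← Finset.add_sum_erase _ f (Finset.mem_univ u), ← Finset.add_sum_erase _ g (Finset.mem_univ u), ht]
  omega

end Sums

/-- weight of pebbles on `A`-vertices -/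
noncomputable def phi (A : Set V) (v : V) (n : ℕ) : ℕ := if v ∈ A then 2 * (n - 1) else 0

lemma phi_mem {A : Set V} {v : V} (h : v ∈ A) (n : ℕ) : phi A v n = 2 * (n - 1) := if_pos h

lemma phi_not {A : Set V} {v : V} (h : v ∉ A) (n : ℕ) : phi A v n = 0 := if_neg h

/-- The simulation invariant between a configuration `D` on `G` and a configuration `F`
on the cut graph, with deficit function `Δ`. -/
def Inv [Fintype V] (A : Set V) (r : V) (D F Δ : V → ℕ) : Prop :=
  (∀ x, x ∉ A → x ≠ r → D x ≤ F x + Δ x) ∧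
  2 * D r + (∑ w, phi A w (D w)) + 2 * ∑ w, Δ w ≤ 2 * F r

theorem step_sim [Fintype V] (G : SimpleGraph V) (A : Set V) (r : V)
    (hrA : r ∉ A)
    (hNA : ∀ a ∈ A, ∀ u, G.Adj a u → u = r ∨ G.Adj r u)
    {D D₁ : V → ℕ} (hstep : PebStep G D D₁) {F Δ : V → ℕ}
    (hinv : Inv A r D F Δ) :
    ∃ F₁ Δ₁, Relation.ReflTransGen (PebStep (cutG G A)) F F₁ ∧ Inv A r D₁ F₁ Δ₁ := by
  obtain ⟨u, v, hadj, h2, hDu, hDv, hrest⟩ := hstep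
  have huv : u ≠ v := hadj.ne
  obtain ⟨hpt, hpot⟩ := hinv
  have hSrel : (∑ w, phi A w (D₁ w)) + (phi A u (D u) + phi A v (D v))
      = (∑ w, phi A w (D w)) + (phi A u (D₁ u) + phi A v (D₁ v)) :=
    sum_rel2 (fun w => phi A w (D₁ w)) (fun w => phi A w (D w)) huv
      (fun w h1 h2 => by simp only [hrest w h1 h2])
  by_cases huA : u ∈ A
  · -- Case 3 : u ∈ A (so u ≠ r)
    have hur : u ≠ r := fun h => hrA (h ▸ huA)
    simp only [phi_mem huA] at hSrel
    by_cases hvr : v = r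
    · -- 3a : v = r, no move
      subst hvr
      simp only [phi_not hrA] at hSrel
      refine ⟨F, Δ, .refl, ?_, ?_⟩
      · intro z hzA hzr
        rw [hrest z (fun h => hzA (h ▸ huA)) hzr]
        exact hpt z hzA hzr
      · omega
    · by_cases hvA : v ∈ A
      · -- 3b : v ∈ A, no move
        simp only [phi_mem hvA] at hSrel
        have hDr : D₁ r = D r := hrest r (Ne.symm hur) (fun h => hvr h.symm)
        refine ⟨F, Δ, .refl, ?_, ?_⟩
        · intro z hzA hzr
          rw [hrest z (fun h => hzA (h ▸ huA)) (fun h => hzA (h ▸ hvA))]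
          exact hpt z hzA hzr
        · omega
      · -- 3c : v ∉ A, v ≠ r : create a deficit at v
        simp only [phi_not hvA] at hSrel
        have hDr : D₁ r = D r := hrest r (Ne.symm hur) (fun h => hvr h.symm)
        set Δ₁ := fun w => if w = v then Δ v + 1 else Δ w with hΔ₁
        have hTrel : (∑ w, Δ₁ w) + Δ v = (∑ w, Δ w) + Δ₁ v :=
          sum_rel1 _ _ v (fun w hw => by simp [hΔ₁, if_neg hw])
        have hΔ₁v : Δ₁ v = Δ v + 1 := by simp [hΔ₁]
        refine ⟨F, Δ₁, .refl, ?_, ?_⟩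
        · intro z hzA hzr
          by_cases hzv : z = v
          · subst hzv
            have := hpt z hzA hzr
            simp only [hΔ₁, if_pos rfl, if_true]
            omega
          · rw [hrest z (fun h => hzA (h ▸ huA)) hzv]
            have := hpt z hzA hzr
            simp only [hΔ₁, if_neg hzv]
            omega
        · omega
  · -- u ∉ A
    simp only [phi_not huA] at hSrel
    by_cases hvA : v ∈ A
    · -- Case 2 : v ∈ A
      have hvr : v ≠ r := fun h => hrA (h ▸ hvA)
      simp only [phi_mem hvA] at hSrel
      by_cases hur : u = r
      · -- 2a : u = r, no move
        subst hur
        refine ⟨F, Δ, .refl, ?_, ?_⟩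
        · intro z hzA hzr
          rw [hrest z hzr (fun h => hzA (h ▸ hvA))]
          exact hpt z hzA hzr
        · omega
      · -- 2b : u ∉ A ∪ {r}
        have hru : G.Adj r u := by
          rcases hNA v hvA u hadj.symm with h | h
          · exact absurd h hur
          · exact h
        have hDr : D₁ r = D r := hrest r (Ne.symm hur) (Ne.symm hvr)
        by_cases hF2 : 2 ≤ F u
        · -- move u → r in the cut graph
          set F₁ := fun w => if w = u then F u - 2 else if w = r then F r + 1 else F w with hF₁
          have hstep : PebStep (cutG G A) F F₁ :=
            pebStep_mk _ (show (cutG G A).Adj u r from ⟨hru.symm, huA, hrA⟩) hF2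
          have hF₁r : F₁ r = F r + 1 := by simp [hF₁, if_neg (Ne.symm hur)]
          refine ⟨F₁, Δ, .single hstep, ?_, ?_⟩
          · intro z hzA hzr
            by_cases hzu : z = u
            · subst hzu
              have := hpt z hzA hzr
              simp only [hF₁, if_pos rfl, if_true]
              omega
            · rw [hrest z hzu (fun h => hzA (h ▸ hvA))]
              have := hpt z hzA hzr
              simp only [hF₁, if_neg hzu, if_neg hzr]
              omega
          · rw [hF₁r]; omega
        · -- cash a deficit at u
          have hΔu : 1 ≤ Δ u := by have := hpt u huA hur; omega
          set Δ₁ := fun w => if w = u then Δ u - 1 else Δ w with hΔ₁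
          have hTrel : (∑ w, Δ₁ w) + Δ u = (∑ w, Δ w) + Δ₁ u :=
            sum_rel1 _ _ u (fun w hw => by simp [hΔ₁, if_neg hw])
          have hΔ₁u : Δ₁ u = Δ u - 1 := by simp [hΔ₁]
          refine ⟨F, Δ₁, .refl, ?_, ?_⟩
          · intro z hzA hzr
            by_cases hzu : z = u
            · subst hzu
              have := hpt z hzA hzr
              simp only [hΔ₁, if_pos rfl, if_true]
              omega
            · rw [hrest z hzu (fun h => hzA (h ▸ hvA))]
              have := hpt z hzA hzr
              simp only [hΔ₁, if_neg hzu]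
              omega
          · omega
    · -- Case 1 : u ∉ A, v ∉ A
      simp only [phi_not hvA] at hSrel
      by_cases hur : u = r
      · -- 1a : move r → v in the cut graph
        subst hur
        have hvr : v ≠ u := Ne.symm huv
        have hF2 : 2 ≤ F u := by omega
        set F₁ := fun w => if w = u then F u - 2 else if w = v then F v + 1 else F w with hF₁
        have hstep : PebStep (cutG G A) F F₁ :=
          pebStep_mk _ (show (cutG G A).Adj u v from ⟨hadj, huA, hvA⟩) hF2
        have hF₁r : F₁ u = F u - 2 := by simp [hF₁]
        refine ⟨F₁, Δ, .single hstep, ?_, ?_⟩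
        · intro z hzA hzr
          by_cases hzv : z = v
          · subst hzv
            have := hpt z hzA hzr
            simp only [hF₁, if_neg hvr, if_pos rfl, if_true]
            omega
          · rw [hrest z hzr hzv]
            have := hpt z hzA hzr
            simp only [hF₁, if_neg hzr, if_neg hzv]
            omega
        · rw [hF₁r]; omega
      · by_cases hvr : v = r
        · -- 1b : v = r
          subst hvr
          by_cases hF2 : 2 ≤ F u
          · set F₁ := fun w => if w = u then F u - 2 else if w = v then F v + 1 else F w with hF₁
            have hstep : PebStep (cutG G A) F F₁ :=
              pebStep_mk _ (show (cutG G A).Adj u v from ⟨hadj, huA, hvA⟩) hF2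
            have hF₁r : F₁ v = F v + 1 := by simp [hF₁, if_neg huv.symm]
            refine ⟨F₁, Δ, .single hstep, ?_, ?_⟩
            · intro z hzA hzr
              by_cases hzu : z = u
              · subst hzu
                have := hpt z hzA hzr
                simp only [hF₁, if_pos rfl, if_true]
                omega
              · rw [hrest z hzu hzr]
                have := hpt z hzA hzr
                simp only [hF₁, if_neg hzu, if_neg hzr]
                omega
            · rw [hF₁r]; omega
          · have hΔu : 1 ≤ Δ u := by have := hpt u huA hur; omega
            set Δ₁ := fun w => if w = u then Δ u - 1 else Δ w with hΔ₁
            have hTrel : (∑ w, Δ₁ w) + Δ u = (∑ w, Δ w) + Δ₁ u :=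
              sum_rel1 _ _ u (fun w hw => by simp [hΔ₁, if_neg hw])
            have hΔ₁u : Δ₁ u = Δ u - 1 := by simp [hΔ₁]
            refine ⟨F, Δ₁, .refl, ?_, ?_⟩
            · intro z hzA hzr
              by_cases hzu : z = u
              · subst hzu
                have := hpt z hzA hzr
                simp only [hΔ₁, if_pos rfl, if_true]
                omega
              · rw [hrest z hzu hzr]
                have := hpt z hzA hzr
                simp only [hΔ₁, if_neg hzu]
                omega
            · omega
        · -- 1c : u, v ∉ A ∪ {r}
          have hDr : D₁ r = D r := hrest r (Ne.symm hur) (Ne.symm hvr)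
          by_cases hF2 : 2 ≤ F u
          · set F₁ := fun w => if w = u then F u - 2 else if w = v then F v + 1 else F w with hF₁
            have hstep : PebStep (cutG G A) F F₁ :=
              pebStep_mk _ (show (cutG G A).Adj u v from ⟨hadj, huA, hvA⟩) hF2
            have hF₁r : F₁ r = F r := by simp [hF₁, if_neg (Ne.symm hur), if_neg (Ne.symm hvr)]
            refine ⟨F₁, Δ, .single hstep, ?_, ?_⟩
            · intro z hzA hzr
              by_cases hzu : z = u
              · subst hzu
                have := hpt z hzA hzr
                simp only [hF₁, if_pos rfl, if_true]
                omega
              · by_cases hzv : z = v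
                · subst hzv
                  have := hpt z hzA hzr
                  simp only [hF₁, if_neg huv.symm, if_pos rfl, if_true]
                  omega
                · rw [hrest z hzu hzv]
                  have := hpt z hzA hzr
                  simp only [hF₁, if_neg hzu, if_neg hzv]
                  omega
            · rw [hF₁r]; omega
          · have hΔu : 1 ≤ Δ u := by have := hpt u huA hur; omega
            set Δ₁ := fun w => if w = u then Δ u - 1 else if w = v then Δ v + 1 else Δ w with hΔ₁
            have hTrel : (∑ w, Δ₁ w) + (Δ u + Δ v) = (∑ w, Δ w) + (Δ₁ u + Δ₁ v) :=
              sum_rel2 _ _ huv (fun w h1 h2 => by simp [hΔ₁, if_neg h1, if_neg h2])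
            have hΔ₁u : Δ₁ u = Δ u - 1 := by simp [hΔ₁]
            have hΔ₁v : Δ₁ v = Δ v + 1 := by simp [hΔ₁, if_neg huv.symm]
            refine ⟨F, Δ₁, .refl, ?_, ?_⟩
            · intro z hzA hzr
              by_cases hzu : z = u
              · subst hzu
                have := hpt z hzA hzr
                simp only [hΔ₁, if_pos rfl, if_true]
                omega
              · by_cases hzv : z = v
                · subst hzv
                  have := hpt z hzA hzr
                  simp only [hΔ₁, if_neg huv.symm, if_pos rfl, if_true]
                  omega
                · rw [hrest z hzu hzv]
                  have := hpt z hzA hzr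
                  simp only [hΔ₁, if_neg hzu, if_neg hzv]
                  omega
            · omega

theorem sim_reach [Fintype V] (G : SimpleGraph V) (A : Set V) (r : V)
    (hrA : r ∉ A)
    (hNA : ∀ a ∈ A, ∀ u, G.Adj a u → u = r ∨ G.Adj r u)
    {D D' : V → ℕ} (hreach : Relation.ReflTransGen (PebStep G) D D') :
    ∀ F Δ : V → ℕ, Inv A r D F Δ →
    ∃ F' Δ', Relation.ReflTransGen (PebStep (cutG G A)) F F' ∧ Inv A r D' F' Δ' := by
  induction hreach with
  | refl => exact fun F Δ h => ⟨F, Δ, .refl, h⟩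
  | tail h₁ h₂ ih =>
    intro F Δ h
    obtain ⟨F₁, Δ₁, hr₁, hinv₁⟩ := ih F Δ h
    obtain ⟨F₂, Δ₂, hr₂, hinv₂⟩ := step_sim G A r hrA hNA h₂ hinv₁
    exact ⟨F₂, Δ₂, hr₁.trans hr₂, hinv₂⟩

lemma cut_step_to_induce (G : SimpleGraph V) (A : Set V) {F F₁ : V → ℕ}
    (h : PebStep (cutG G A) F F₁) :
    PebStep (G.induce {v | v ∉ A}) (fun x => F x.val) (fun x => F₁ x.val) := by
  obtain ⟨u, v, ⟨hadj, hu, hv⟩, h2, e1, e2, e3⟩ := h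
  refine ⟨⟨u, hu⟩, ⟨v, hv⟩, hadj, h2, e1, e2, ?_⟩
  intro w h1 h2'
  exact e3 w.val (fun h => h1 (Subtype.ext h)) (fun h => h2' (Subtype.ext h))

lemma induce_step_to_G (G : SimpleGraph V) (s₀ : Set V) (C : V → ℕ) {F F₁ : ↥s₀ → ℕ}
    (h : PebStep (G.induce s₀) F F₁) :
    PebStep G (fun w => if hw : w ∈ s₀ then F ⟨w, hw⟩ else C w)
              (fun w => if hw : w ∈ s₀ then F₁ ⟨w, hw⟩ else C w) := by
  obtain ⟨u', v', hadj, h2, e1, e2, e3⟩ := h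
  have key : ∀ (Fx : ↥s₀ → ℕ) (x : ↥s₀),
      (if hw : (x : V) ∈ s₀ then Fx ⟨(x : V), hw⟩ else C x) = Fx x := by
    intro Fx x
    rw [dif_pos x.2]
  refine ⟨u'.val, v'.val, hadj, ?_, ?_, ?_, ?_⟩
  · simpa only [key] using h2
  · simp only [key]; exact e1
  · simp only [key]; exact e2
  · intro w h1 h2'
    by_cases hw : w ∈ s₀
    · simp only [dif_pos hw]
      exact e3 ⟨w, hw⟩ (fun h => h1 (congrArg Subtype.val h)) (fun h => h2' (congrArg Subtype.val h))
    · simp only [dif_neg hw]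

lemma cut_reach_to_induce (G : SimpleGraph V) (A : Set V) {F F' : V → ℕ}
    (h : Relation.ReflTransGen (PebStep (cutG G A)) F F') :
    Relation.ReflTransGen (PebStep (G.induce {v | v ∉ A}))
      (fun x => F x.val) (fun x => F' x.val) := by
  induction h with
  | refl => exact .refl
  | tail _ h₂ ih => exact ih.tail (cut_step_to_induce G A h₂)

lemma induce_reach_to_G (G : SimpleGraph V) (s₀ : Set V) (C : V → ℕ) {F F' : ↥s₀ → ℕ}
    (h : Relation.ReflTransGen (PebStep (G.induce s₀)) F F') :
    Relation.ReflTransGen (PebStep G)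
      (fun w => if hw : w ∈ s₀ then F ⟨w, hw⟩ else C w)
      (fun w => if hw : w ∈ s₀ then F' ⟨w, hw⟩ else C w) := by
  induction h with
  | refl => exact .refl
  | tail _ h₂ ih => exact ih.tail (induce_step_to_G G s₀ C h₂)

lemma induce_reach_to_G' (G : SimpleGraph V) (s₀ : Set V) (C : V → ℕ) {F' : ↥s₀ → ℕ}
    (h : Relation.ReflTransGen (PebStep (G.induce s₀)) (fun x => C x.val) F') :
    Relation.ReflTransGen (PebStep G) C
      (fun w => if hw : w ∈ s₀ then F' ⟨w, hw⟩ else C w) := by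
  have h0 := induce_reach_to_G G s₀ C h
  have heq : (fun w => if hw : w ∈ s₀ then C ((⟨w, hw⟩ : ↥s₀) : V) else C w) = C := by
    funext w
    by_cases hw : w ∈ s₀ <;> simp [hw]
  rwa [heq] at h0

lemma induce_connected (G : SimpleGraph V) (hG : G.Connected) (A : Set V) (r : V) (hrA : r ∉ A)
    (hNA : ∀ a ∈ A, ∀ u, G.Adj a u → u = r ∨ G.Adj r u) :
    (G.induce {v | v ∉ A}).Connected := by
  have hreach : ∀ (x y : V) (p : G.Walk x y), r = y → ∀ (hx : x ∉ A),
      (G.induce {v | v ∉ A}).Reachable ⟨x, hx⟩ ⟨r, hrA⟩ := by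
    intro x y p
    induction p with
    | nil => rintro rfl hx; exact Reachable.refl _
    | @cons a b c h q ih =>
      rintro rfl hx
      by_cases hb : b ∈ A
      · rcases hNA b hb a h.symm with h' | h'
        · subst h'; exact Reachable.refl _
        · exact Adj.reachable
            (show (G.induce {v | v ∉ A}).Adj ⟨a, hx⟩ ⟨r, hrA⟩ from h'.symm)
      · exact (Adj.reachable
          (show (G.induce {v | v ∉ A}).Adj ⟨a, hx⟩ ⟨b, hb⟩ from h)).trans (ih rfl hb)
  have hx : ∀ x : ↥{v | v ∉ A}, (G.induce {v | v ∉ A}).Reachable x ⟨r, hrA⟩ :=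
    fun x => (hG.preconnected x.val r).elim (fun p => hreach x.val r p rfl x.2)
  haveI : Nonempty ↥{v | v ∉ A} := ⟨⟨r, hrA⟩⟩
  exact ⟨fun a b => (hx a).trans (hx b).symm⟩

end NRem

/-- Neighbor Removal Lemma: if `A ⊆ N(r)` satisfies `N(A) ⊆ N[r]`,
then `π(G,r) = |A| + π(G−A, r)`. -/
theorem neighbor_removal {V : Type} [Fintype V] (G : SimpleGraph V) (hG : G.Connected)
    (r : V) (A : Set V) (hA : A ⊆ G.neighborSet r)
    (hNA : ∀ a ∈ A, G.neighborSet a ⊆ insert r (G.neighborSet r)) :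
    pin G r = A.ncard +
      pin (G.induce {v | v ∉ A}) ⟨r, fun h => G.loopless.irrefl r (hA h)⟩ := by
  classical
  have hrA : r ∉ A := fun h => G.loopless.irrefl r (hA h)
  have hNA' : ∀ a ∈ A, ∀ u, G.Adj a u → u = r ∨ G.Adj r u := by
    intro a ha u hu
    rcases Set.mem_insert_iff.mp (hNA a ha hu) with h | h
    · exact Or.inl h
    · exact Or.inr h
  haveI : Fintype ↥{v | v ∉ A} := Fintype.ofFinite _
  haveI : Fintype ↥A := Fintype.ofFinite _
  have hHconn := NRem.induce_connected G hG A r hrA hNA'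
  show sInf {s | ∀ C : V → ℕ, s ≤ ∑ᶠ v, C v → TSolvable G C r 1}
      = A.ncard + sInf {s | ∀ C : ↥{v | v ∉ A} → ℕ, s ≤ ∑ᶠ v, C v →
          TSolvable (G.induce {v | v ∉ A}) C ⟨r, fun h => G.loopless.irrefl r (hA h)⟩ 1}
  set SG : Set ℕ := {s | ∀ C : V → ℕ, s ≤ ∑ᶠ v, C v → TSolvable G C r 1} with hSGdef
  set SH : Set ℕ := {s | ∀ C : ↥{v | v ∉ A} → ℕ, s ≤ ∑ᶠ v, C v →
      TSolvable (G.induce {v | v ∉ A}) C ⟨r, fun h => G.loopless.irrefl r (hA h)⟩ 1} with hSHdef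
  set π' : ℕ := sInf SH with hπ'def
  have hk : A.ncard = A.toFinset.card := Set.ncard_eq_toFinset_card' A
  -- SH and SG are nonempty
  obtain ⟨BH, hBH⟩ := NRem.exists_bound (G.induce {v | v ∉ A}) hHconn
    ⟨r, fun h => G.loopless.irrefl r (hA h)⟩
  have hSH_ne : SH.Nonempty := by
    refine ⟨BH, ?_⟩
    simp only [hSHdef, Set.mem_setOf_eq]
    intro C hC
    exact hBH C (by rwa [finsum_eq_sum_of_fintype] at hC)
  obtain ⟨BG, hBG⟩ := NRem.exists_bound G hG r
  have hSG_ne : SG.Nonempty := by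
    refine ⟨BG, ?_⟩
    simp only [hSGdef, Set.mem_setOf_eq]
    intro C hC
    exact hBG C (by rwa [finsum_eq_sum_of_fintype] at hC)
  have hπ'mem : π' ∈ SH := Nat.sInf_mem hSH_ne
  -- π' is positive
  have hπ'pos : 1 ≤ π' := by
    by_contra hc
    have h00 : π' = 0 := by omega
    have h0' : (0 : ℕ) ∈ SH := h00 ▸ hπ'mem
    simp only [hSHdef, Set.mem_setOf_eq] at h0'
    obtain ⟨C', hreach, h1⟩ := h0' (fun _ => 0) (by simp)
    rw [NRem.reach_zero _ hreach] at h1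
    simp at h1
  -- UPPER BOUND : A.ncard + π' ∈ SG
  have hupper : (A.ncard + π') ∈ SG := by
    simp only [hSGdef, Set.mem_setOf_eq]
    intro C hC
    rw [finsum_eq_sum_of_fintype] at hC
    by_cases hex : ∃ a ∈ A, 2 ≤ C a
    · obtain ⟨a, ha, h2⟩ := hex
      have hadj : G.Adj a r := (hA ha).symm
      have har : a ≠ r := fun h => hrA (h ▸ ha)
      refine ⟨_, Relation.ReflTransGen.single (NRem.pebStep_mk G hadj h2), ?_⟩
      simp only [if_neg (Ne.symm har), if_pos rfl, if_true]
      omega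
    · push_neg at hex
      have hsumA : ∑ a ∈ A.toFinset, C a ≤ A.toFinset.card := by
        have := Finset.sum_le_card_nsmul A.toFinset C 1
          (fun x hx => by have := hex x (Set.mem_toFinset.mp hx); omega)
        simpa using this
      have hsub : ∑ x ∈ A.toFinsetᶜ, C x = ∑ x : ↥{v | v ∉ A}, C x.val :=
        Finset.sum_subtype A.toFinsetᶜ (fun x => by simp [Set.mem_toFinset]) C
      have htot := Finset.sum_add_sum_compl A.toFinset C
      have hπC : π' ≤ ∑ᶠ x : ↥{v | v ∉ A}, C x.val := by
        rw [finsum_eq_sum_of_fintype]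
        omega
      have hmem' := hπ'mem
      simp only [hSHdef, Set.mem_setOf_eq] at hmem'
      obtain ⟨Fs, hreachH, h1⟩ := hmem' (fun x => C x.val) hπC
      have hlift := NRem.induce_reach_to_G' G {v | v ∉ A} C hreachH
      refine ⟨_, hlift, ?_⟩
      have hrmem : r ∈ {v | v ∉ A} := hrA
      simp only [dif_pos hrmem]
      exact h1
  -- LOWER BOUND
  have hnot : (π' - 1) ∉ SH := fun hmem => by
    have := Nat.sInf_le hmem
    omega
  simp only [hSHdef, Set.mem_setOf_eq] at hnot
  push_neg at hnot
  obtain ⟨C', hC'size, hC'unsolv⟩ := hnot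
  rw [finsum_eq_sum_of_fintype] at hC'size
  set C : V → ℕ := fun w => if hw : w ∉ A then C' ⟨w, hw⟩ else 1 with hCdef
  have hCin : ∀ w (hw : w ∉ A), C w = C' ⟨w, hw⟩ := fun w hw => dif_pos hw
  have hCout : ∀ w, w ∈ A → C w = 1 := fun w hw => dif_neg (not_not_intro hw)
  set F₀ : V → ℕ := fun w => if hw : w ∉ A then C' ⟨w, hw⟩ else 0 with hF₀def
  have hF₀in : ∀ w (hw : w ∉ A), F₀ w = C' ⟨w, hw⟩ := fun w hw => dif_pos hw
  have hCunsolv : ¬ TSolvable G C r 1 := by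
    rintro ⟨Ds, hreachG, h1G⟩
    have hinv0 : NRem.Inv A r C F₀ (fun _ => 0) := by
      constructor
      · intro x hxA _
        rw [hCin x hxA, hF₀in x hxA]
        omega
      · have hphi0 : ∀ w, NRem.phi A w (C w) = 0 := by
          intro w
          by_cases hw : w ∈ A
          · rw [NRem.phi_mem hw, hCout w hw]
          · exact NRem.phi_not hw _
        have hs0 : ∑ w, NRem.phi A w (C w) = 0 := Finset.sum_eq_zero (fun w _ => hphi0 w)
        have hz : (∑ w : V, (fun _ : V => (0:ℕ)) w) = 0 := by simp
        have hfr : F₀ r = C r := by rw [hCin r hrA, hF₀in r hrA]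
        omega
    obtain ⟨Fs, Δs, hreachCut, hptF, hpotF⟩ :=
      NRem.sim_reach G A r hrA hNA' hreachG F₀ (fun _ => 0) hinv0
    have hFsr : 1 ≤ Fs r := by omega
    have hliftH := NRem.cut_reach_to_induce G A hreachCut
    have hF₀eq : (fun x : ↥{v | v ∉ A} => F₀ x.val) = C' := by
      funext x
      rw [hF₀in x.val x.2]
    rw [hF₀eq] at hliftH
    exact hC'unsolv ⟨_, hliftH, hFsr⟩
  have hCsize : A.ncard + π' - 1 ≤ ∑ᶠ v, C v := by
    rw [finsum_eq_sum_of_fintype]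
    have h2 : ∑ x ∈ A.toFinset, C x = A.toFinset.card := by
      rw [Finset.sum_congr rfl (fun x hx => hCout x (Set.mem_toFinset.mp hx))]
      simp
    have h1' : ∑ x ∈ A.toFinsetᶜ, C x = ∑ x : ↥{v | v ∉ A}, C x.val :=
      Finset.sum_subtype A.toFinsetᶜ (fun x => by simp [Set.mem_toFinset]) C
    have h1 : ∑ x ∈ A.toFinsetᶜ, C x = ∑ x : ↥{v | v ∉ A}, C' x := by
      rw [h1']
      exact Finset.sum_congr rfl (fun x _ => hCin x.val x.2)
    have htot := Finset.sum_add_sum_compl A.toFinset C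
    omega
  have hlow : (A.ncard + π' - 1) ∉ SG := by
    simp only [hSGdef, Set.mem_setOf_eq]
    intro hmem
    exact hCunsolv (hmem C hCsize)
  have hge : A.ncard + π' ≤ sInf SG := by
    by_contra hcon
    push_neg at hcon
    have hmem := Nat.sInf_mem hSG_ne
    simp only [hSGdef, Set.mem_setOf_eq] at hmem
    refine hlow ?_
    simp only [hSGdef, Set.mem_setOf_eq]
    intro C0 hC0
    have hlt : sInf SG ≤ A.ncard + π' - 1 := by omega
    exact hmem C0 (le_trans hlt hC0)
  have hle : sInf SG ≤ A.ncard + π' := Nat.sInf_le hupper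
  omega
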